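/- arXiv:2010.05416 — 5 statements merged into one kernel-verified Lean document; each statement's English description precedes it below -/
import Mathlib

section
/- Let C be a 0-1 matrix that is locally separable, meaning: for every square submatrix M of C of size k ≥ 3 whose rows all come from a distinguished 'coupling' row set, either (i) M has two identical columns, (ii) M has two identical rows, or (iii) the rows and columns of M can be permuted so that M is block upper-triangular with square diagonal blocks of sizes k0 and k - k0 for some 1 ≤ k0 ≤ k - 1; and every row of C not in the coupling set contains at most one nonzero entry. Then C is totally unimodular. -/
private lemma mem_signRange_iff (x : ℝ) :
    x ∈ Set.range (SignType.cast : SignType → ℝ) ↔ x = 0 ∨ x = 1 ∨ x = -1 := by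
  constructor
  · rintro ⟨s, rfl⟩; cases s <;> simp
  · rintro (rfl | rfl | rfl)
    · exact ⟨0, rfl⟩
    · exact ⟨1, rfl⟩
    · exact ⟨-1, by simp⟩

private lemma mul_mem_signRange {x y : ℝ}
    (hx : x ∈ Set.range (SignType.cast : SignType → ℝ))
    (hy : y ∈ Set.range (SignType.cast : SignType → ℝ)) :
    x * y ∈ Set.range (SignType.cast : SignType → ℝ) := by
  rw [mem_signRange_iff] at hx hy ⊢
  rcases hx with rfl | rfl | rfl <;> rcases hy with rfl | rfl | rfl <;> norm_num

private lemma perm_det_mem_signRange {k : ℕ} (N : Matrix (Fin k) (Fin k) ℝ)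
    (σ τ : Equiv.Perm (Fin k))
    (h : N.det ∈ Set.range (SignType.cast : SignType → ℝ)) :
    (N.submatrix σ τ).det ∈ Set.range (SignType.cast : SignType → ℝ) := by
  have h1 : (N.submatrix σ τ) = (N.submatrix id τ).submatrix σ id := rfl
  rw [h1, Matrix.det_permute, Matrix.det_permute']
  rcases Int.units_eq_one_or (Equiv.Perm.sign σ) with hs | hs <;>
    rcases Int.units_eq_one_or (Equiv.Perm.sign τ) with ht | ht <;>
    rw [hs, ht] <;>
    rw [mem_signRange_iff] at h ⊢ <;>
    rcases h with h | h | h <;> rw [h] <;> norm_num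

/-- A locally separable 0-1 matrix is totally unimodular.  The rows of `A` split into a
distinguished "coupling" set `S` and the remaining rows, each of which has at most one nonzero
entry.  Local separability: every square submatrix of size `k ≥ 3` whose rows all come from `S`
either (i) has two identical columns, (ii) has two identical rows, or (iii) can be permuted into
block upper-triangular form with square diagonal blocks of sizes `k0` and `k - k0`,
`1 ≤ k0 ≤ k - 1`. -/
theorem tu_of_locally_separable {m n : Type*} (A : Matrix m n ℝ) (S : Set m)
    (h01 : ∀ i j, A i j = 0 ∨ A i j = 1)
    (hnoncoupling : ∀ i ∉ S, ∀ j j' : n, A i j ≠ 0 → A i j' ≠ 0 → j = j')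
    (hsep : ∀ k : ℕ, 3 ≤ k → ∀ r : Fin k → m, Function.Injective r → (∀ i, r i ∈ S) →
      ∀ c : Fin k → n, Function.Injective c →
        (∃ j j' : Fin k, j ≠ j' ∧ ∀ i, A (r i) (c j) = A (r i) (c j')) ∨
        (∃ i i' : Fin k, i ≠ i' ∧ ∀ j, A (r i) (c j) = A (r i') (c j)) ∨
        (∃ (σ τ : Equiv.Perm (Fin k)) (k0 : ℕ), 1 ≤ k0 ∧ k0 ≤ k - 1 ∧
          ∀ i j : Fin k, k0 ≤ (i : ℕ) → (j : ℕ) < k0 → A (r (σ i)) (c (τ j)) = 0)) :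
    A.IsTotallyUnimodular := by
  intro k
  induction k using Nat.strong_induction_on with
  | _ k IH =>
  intro f g hf hg
  match k, IH, f, g, hf, hg with
  | 0, IH, f, g, hf, hg =>
      exact ⟨1, by simp [Matrix.det_fin_zero]⟩
  | 1, IH, f, g, hf, hg =>
      rw [Matrix.det_fin_one, mem_signRange_iff]
      rcases h01 (f 0) (g 0) with h | h <;> simp [Matrix.submatrix, h]
  | 2, IH, f, g, hf, hg =>
      rw [Matrix.det_fin_two, mem_signRange_iff]
      rcases h01 (f 0) (g 0) with h00 | h00 <;>
        rcases h01 (f 0) (g 1) with h01' | h01' <;>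
        rcases h01 (f 1) (g 0) with h10 | h10 <;>
        rcases h01 (f 1) (g 1) with h11 | h11 <;>
        simp [Matrix.submatrix_apply, h00, h01', h10, h11]
  | (k' + 3), IH, f, g, hf, hg =>
      set M : Matrix (Fin (k' + 3)) (Fin (k' + 3)) ℝ := A.submatrix f g with hM
      by_cases hall : ∀ i, f i ∈ S
      · rcases hsep (k' + 3) (by omega) f hf hall g hg with
          ⟨j, j', hjj, hcol⟩ | ⟨i, i', hii, hrow⟩ | ⟨σ, τ, k0, hk01, hk0k, hzero⟩
        · refine ⟨0, ?_⟩
          rw [SignType.coe_zero]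
          exact (Matrix.det_zero_of_column_eq hjj hcol).symm
        · refine ⟨0, ?_⟩
          rw [SignType.coe_zero]
          exact (Matrix.det_zero_of_row_eq hii (funext hrow)).symm
        · -- block case
          have hMdecomp : M = (M.submatrix σ τ).submatrix σ.symm τ.symm := by
            ext i j; simp [Matrix.submatrix_apply]
          rw [hMdecomp]
          apply perm_det_mem_signRange
          set k1 : ℕ := (k' + 3) - k0 with hk1
          have hadd : k0 + k1 = k' + 3 := by omega
          set e : Fin k0 ⊕ Fin k1 ≃ Fin (k' + 3) :=
            finSumFinEquiv.trans (finCongr hadd) with he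
          set N : Matrix (Fin k0 ⊕ Fin k1) (Fin k0 ⊕ Fin k1) ℝ :=
            (M.submatrix σ τ).submatrix e e with hN
          have hdet : (M.submatrix σ τ).det = N.det :=
            (Matrix.det_submatrix_equiv_self e _).symm
          rw [hdet]
          have h0 : N.toBlocks₂₁ = 0 := by
            ext i j
            show N (Sum.inr i) (Sum.inl j) = 0
            have : A (f (σ (e (Sum.inr i)))) (g (τ (e (Sum.inl j)))) = 0 := by
              apply hzero
              · simp [he, finSumFinEquiv]
              · simp [he, finSumFinEquiv]
            simpa [hN, hM, Matrix.submatrix_apply] using this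
          have hblock : N = Matrix.fromBlocks N.toBlocks₁₁ N.toBlocks₁₂ 0 N.toBlocks₂₂ := by
            conv_lhs => rw [← Matrix.fromBlocks_toBlocks N]
            rw [h0]
          rw [hblock, Matrix.det_fromBlocks_zero₂₁]
          apply mul_mem_signRange
          · have h1 : N.toBlocks₁₁ =
                A.submatrix (fun i => f (σ (e (Sum.inl i)))) (fun j => g (τ (e (Sum.inl j)))) := by
              ext i j; rfl
            rw [h1]
            exact IH k0 (by omega) _ _
              (fun a b hab => Sum.inl_injective (e.injective (σ.injective (hf hab))))
              (fun a b hab => Sum.inl_injective (e.injective (τ.injective (hg hab))))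
          · have h2 : N.toBlocks₂₂ =
                A.submatrix (fun i => f (σ (e (Sum.inr i)))) (fun j => g (τ (e (Sum.inr j)))) := by
              ext i j; rfl
            rw [h2]
            exact IH k1 (by omega) _ _
              (fun a b hab => Sum.inr_injective (e.injective (σ.injective (hf hab))))
              (fun a b hab => Sum.inr_injective (e.injective (τ.injective (hg hab))))
      · push_neg at hall
        obtain ⟨i₀, hi₀⟩ := hall
        by_cases hz : ∀ j, M i₀ j = 0
        · refine ⟨0, ?_⟩
          rw [SignType.coe_zero]
          exact (Matrix.det_eq_zero_of_row_eq_zero i₀ hz).symm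
        · push_neg at hz
          obtain ⟨j₀, hj₀⟩ := hz
          have h1 : M i₀ j₀ = 1 := (h01 (f i₀) (g j₀)).resolve_left hj₀
          have hz' : ∀ j, j ≠ j₀ → M i₀ j = 0 := by
            intro j hj
            by_contra hne
            exact hj (hg (hnoncoupling (f i₀) hi₀ (g j) (g j₀) hne hj₀))
          rw [show (M.det) = _ from Matrix.det_succ_row M i₀,
            Finset.sum_eq_single j₀
              (fun j _ hj => by rw [hz' j hj]; ring)
              (fun h => absurd (Finset.mem_univ j₀) h), h1]
          have hd := IH (k' + 2) (by omega) (f ∘ i₀.succAbove) (g ∘ j₀.succAbove)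
            (hf.comp Fin.succAbove_right_injective)
            (hg.comp Fin.succAbove_right_injective)
          rw [← Matrix.submatrix_submatrix] at hd
          rw [mem_signRange_iff] at hd ⊢
          rcases Nat.even_or_odd ((i₀ : ℕ) + (j₀ : ℕ)) with he | he
          · rw [he.neg_one_pow]
            rcases hd with h | h | h <;> rw [h] <;> norm_num
          · rw [he.neg_one_pow]
            rcases hd with h | h | h <;> rw [h] <;> norm_num
end

section
/- Under the hypotheses t̂ ≥ v_max/d_max + v_min^c/c_max and l ≥ v_max²/(2·d_max) + (v_min^c)²/(2·c_max), with v_min^c ≤ v_{i-1} ≤ v_max and T = a*·t̂ chosen so that D(v_max) ≥ l (a* minimal with this property), there exists θ* ∈ [0, v_max] such that D(θ*) = l, where D(θ) = ∫₀ᵀ v(t;θ) dt for the family of speed curves v(t;θ) defined by v(t;θ) = max(−d_max·t + v_{i-1}, θ, c_max·t + v_min^c − c_max·T) for θ ∈ [0, v_{i-1}] and v(t;θ) = min(c_max·t + v_{i-1}, θ) for θ ∈ (v_{i-1}, v_max]. -/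
open MeasureTheory intervalIntegral Set

lemma integral_linear (c d a b : ℝ) :
    ∫ t in a..b, (c * t + d) = c * (b ^ 2 - a ^ 2) / 2 + d * (b - a) := by
  have h1 : IntervalIntegrable (fun t : ℝ => c * t) MeasureTheory.volume a b :=
    (continuous_const.mul continuous_id).intervalIntegrable a b
  rw [intervalIntegral.integral_add h1 intervalIntegrable_const,
    intervalIntegral.integral_const_mul, integral_id, intervalIntegral.integral_const]
  simp [smul_eq_mul]
  ring

lemma max_lip (f a b : ℝ) : |max f a - max f b| ≤ |a - b| := by
  have h := abs_max_sub_max_le_max f a f b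
  simpa [max_eq_right (abs_nonneg (a - b))] using h

lemma min_lip (f a b : ℝ) : |min f a - min f b| ≤ |a - b| := by
  have h := abs_min_sub_min_le_max f a f b
  simpa [max_eq_right (abs_nonneg (a - b))] using h

lemma max3_lip (f g a b : ℝ) : |max (max f a) g - max (max f b) g| ≤ |a - b| :=
  (abs_max_sub_max_le_abs _ _ _).trans (max_lip f a b)

/-- Existence of an eligible speed curve (Proposition 4): under the conditions
`t̂ ≥ v_max/d_max + v_min^c/c_max` and `l ≥ v_max²/(2 d_max) + (v_min^c)²/(2 c_max)`, with
`v_min^c ≤ v_{i-1} ≤ v_max` and travel time `T = a* t̂` chosen so that `D(v_max) ≥ l`, there is a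
parameter `θ* ∈ [0, v_max]` whose speed curve covers exactly the distance `l`, i.e.
`D(θ*) = l` where `D(θ) = ∫₀ᵀ v(t;θ) dt`. -/
theorem scg_exists_speed_curve (v1 vmin vmax cmax dmax that T l : ℝ) (a : ℕ) (ha : 0 < a)
    (hT : T = a * that) (hthat : 0 < that)
    (hvmin : 0 < vmin) (hv1 : vmin ≤ v1) (hv2 : v1 ≤ vmax) (hc : 0 < cmax) (hd : 0 < dmax)
    (hthat_cond : that ≥ vmax / dmax + vmin / cmax)
    (hl : l ≥ vmax ^ 2 / (2 * dmax) + vmin ^ 2 / (2 * cmax))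
    (v : ℝ → ℝ → ℝ)
    (hv : ∀ t θ, v t θ =
      if θ ≤ v1 then max (max (-dmax * t + v1) θ) (cmax * t + vmin - cmax * T)
      else min (cmax * t + v1) θ)
    (D : ℝ → ℝ) (hD : ∀ θ, D θ = ∫ t in (0 : ℝ)..T, v t θ)
    (hDmax : D vmax ≥ l) :
    ∃ θstar ∈ Set.Icc (0 : ℝ) vmax, D θstar = l := by

  have ha1 : (1:ℝ) ≤ (a:ℝ) := by exact_mod_cast ha
  have h0v1 : (0:ℝ) ≤ v1 := le_trans hvmin.le hv1
  have h0vmax : (0:ℝ) ≤ vmax := le_trans h0v1 hv2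
  have hTthat : that ≤ T := by
    have := mul_le_mul_of_nonneg_right ha1 hthat.le
    rw [hT]; linarith
  have hvmc : 0 < vmin / cmax := by positivity
  have hvmd : 0 ≤ vmax / dmax := by positivity
  have hT0 : 0 < T := by
    have : 0 < vmax / dmax + vmin / cmax := by linarith
    linarith [le_trans hthat_cond hTthat, le_trans this.le (le_trans hthat_cond hTthat)]
  have hTge : vmax / dmax + vmin / cmax ≤ T := le_trans hthat_cond hTthat
  -- continuity in t
  have hcontt : ∀ θ, Continuous fun t => v t θ := by
    intro θ
    have : (fun t => v t θ) = fun t =>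
        if θ ≤ v1 then max (max (-dmax * t + v1) θ) (cmax * t + vmin - cmax * T)
        else min (cmax * t + v1) θ := funext fun t => hv t θ
    rw [this]
    split_ifs <;> fun_prop
  have hint : ∀ θ, IntervalIntegrable (fun t => v t θ) volume 0 T :=
    fun θ => (hcontt θ).intervalIntegrable 0 T
  -- pointwise Lipschitz in θ on [0, T]
  have hptw : ∀ t, 0 ≤ t → t ≤ T → ∀ θ₁ θ₂ : ℝ, |v t θ₁ - v t θ₂| ≤ |θ₁ - θ₂| := by
    intro t ht0 htT θ₁ θ₂
    have hf : -dmax * t + v1 ≤ v1 := by nlinarith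
    have hg : cmax * t + vmin - cmax * T ≤ v1 := by nlinarith
    have hmid : max (max (-dmax * t + v1) v1) (cmax * t + vmin - cmax * T) = v1 := by
      rw [max_eq_right hf, max_eq_left hg]
    have hmin : min (cmax * t + v1) v1 = v1 := by
      apply min_eq_right; nlinarith
    have key : ∀ θa θb : ℝ, θa ≤ v1 → v1 < θb → |v t θa - v t θb| ≤ |θa - θb| := by
      intro θa θb hθa hθb
      rw [hv t θa, hv t θb, if_pos hθa, if_neg (not_le.mpr hθb)]
      have h1 := max3_lip (-dmax * t + v1) (cmax * t + vmin - cmax * T) θa v1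
      rw [hmid] at h1
      have h2 := min_lip (cmax * t + v1) θb v1
      rw [hmin] at h2
      have h3 := abs_sub_le (max (max (-dmax * t + v1) θa) (cmax * t + vmin - cmax * T)) v1
        (min (cmax * t + v1) θb)
      rw [abs_of_nonpos (by linarith : θa - v1 ≤ 0)] at h1
      rw [abs_of_nonneg (by linarith : (0:ℝ) ≤ θb - v1)] at h2
      rw [abs_sub_comm] at h2
      rw [abs_of_nonpos (by linarith : θa - θb ≤ 0)]
      linarith
    rcases le_or_gt θ₁ v1 with h1 | h1 <;> rcases le_or_gt θ₂ v1 with h2 | h2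
    · rw [hv t θ₁, hv t θ₂, if_pos h1, if_pos h2]; exact max3_lip _ _ _ _
    · exact key θ₁ θ₂ h1 h2
    · rw [abs_sub_comm, abs_sub_comm θ₁ θ₂]; exact key θ₂ θ₁ h2 h1
    · rw [hv t θ₁, hv t θ₂, if_neg (not_le.mpr h1), if_neg (not_le.mpr h2)]
      exact min_lip _ _ _
  -- D is Lipschitz hence continuous
  have hDcont : Continuous D := by
    have hlip : LipschitzWith (Real.toNNReal T) D := by
      apply LipschitzWith.of_dist_le_mul
      intro θ₁ θ₂
      rw [Real.dist_eq, Real.dist_eq, hD θ₁, hD θ₂,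
        ← intervalIntegral.integral_sub (hint θ₁) (hint θ₂)]
      have hb := intervalIntegral.norm_integral_le_of_norm_le_const
        (f := fun t => v t θ₁ - v t θ₂) (C := |θ₁ - θ₂|) (a := (0:ℝ)) (b := T) ?_
      · calc |∫ t in (0:ℝ)..T, (v t θ₁ - v t θ₂)| ≤ |θ₁ - θ₂| * |T - 0| := hb
          _ = Real.toNNReal T * |θ₁ - θ₂| := by
            rw [Real.coe_toNNReal T hT0.le, sub_zero, abs_of_nonneg hT0.le]; ring
      · intro x hx
        rw [Set.uIoc_of_le hT0.le] at hx
        exact hptw x hx.1.le hx.2 θ₁ θ₂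
    exact hlip.continuous
  -- D 0 ≤ l
  have hD0 : D 0 ≤ l := by
    have ht10 : 0 ≤ v1 / dmax := by positivity
    have hle1 : v1 / dmax ≤ vmax / dmax := by gcongr
    have ht1T : v1 / dmax ≤ T := by linarith
    have ht20 : 0 ≤ T - vmin / cmax := by linarith
    have ht2T : T - vmin / cmax ≤ T := by linarith
    have hdt1 : dmax * (v1 / dmax) = v1 := by field_simp
    have hct2 : cmax * (T - vmin / cmax) = cmax * T - vmin := by field_simp
    have hFc : Continuous (fun t : ℝ => max (-dmax * t + v1) 0) := by fun_prop
    have hGc : Continuous (fun t : ℝ => max (cmax * t + vmin - cmax * T) 0) := by fun_prop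
    have hbound : D 0 ≤ ∫ t in (0:ℝ)..T,
        (max (-dmax * t + v1) 0 + max (cmax * t + vmin - cmax * T) 0) := by
      rw [hD 0]
      apply intervalIntegral.integral_mono_on hT0.le (hint 0)
        ((hFc.add hGc).intervalIntegrable 0 T)
      intro x hx
      rw [hv x 0, if_pos h0v1]
      apply max_le
      · exact le_add_of_nonneg_right (le_max_right _ _)
      · exact le_add_of_nonneg_of_le (le_max_right _ _) (le_max_left _ _)
    have hFint : ∫ t in (0:ℝ)..T, max (-dmax * t + v1) 0 = v1 ^ 2 / (2 * dmax) := by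
      rw [← intervalIntegral.integral_add_adjacent_intervals
        (hFc.intervalIntegrable 0 (v1 / dmax)) (hFc.intervalIntegrable (v1 / dmax) T)]
      have e1 : ∫ t in (0:ℝ)..(v1 / dmax), max (-dmax * t + v1) 0
          = ∫ t in (0:ℝ)..(v1 / dmax), (-dmax * t + v1) := by
        apply intervalIntegral.integral_congr
        intro x hx
        rw [Set.uIcc_of_le ht10] at hx
        have hdx : dmax * x ≤ v1 := by
          rw [← hdt1]; gcongr; exact hx.2
        exact max_eq_left (by linarith)
      have e2 : ∫ t in (v1 / dmax)..T, max (-dmax * t + v1) 0 = 0 := by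
        have hcg : ∫ t in (v1 / dmax)..T, max (-dmax * t + v1) 0
            = ∫ _ in (v1 / dmax)..T, (0:ℝ) := by
          apply intervalIntegral.integral_congr
          intro x hx
          rw [Set.uIcc_of_le ht1T] at hx
          have hdx : v1 ≤ dmax * x := by
            rw [← hdt1]; gcongr; exact hx.1
          exact max_eq_right (by linarith)
        rw [hcg]; simp
      rw [e1, e2, integral_linear]
      field_simp
      ring
    have hGint : ∫ t in (0:ℝ)..T, max (cmax * t + vmin - cmax * T) 0
        = vmin ^ 2 / (2 * cmax) := by
      rw [← intervalIntegral.integral_add_adjacent_intervals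
        (hGc.intervalIntegrable 0 (T - vmin / cmax)) (hGc.intervalIntegrable (T - vmin / cmax) T)]
      have e1 : ∫ t in (0:ℝ)..(T - vmin / cmax), max (cmax * t + vmin - cmax * T) 0 = 0 := by
        have hcg : ∫ t in (0:ℝ)..(T - vmin / cmax), max (cmax * t + vmin - cmax * T) 0
            = ∫ _ in (0:ℝ)..(T - vmin / cmax), (0:ℝ) := by
          apply intervalIntegral.integral_congr
          intro x hx
          rw [Set.uIcc_of_le ht20] at hx
          have hcx : cmax * x ≤ cmax * T - vmin := by
            rw [← hct2]; gcongr; exact hx.2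
          exact max_eq_right (by linarith)
        rw [hcg]; simp
      have e2 : ∫ t in (T - vmin / cmax)..T, max (cmax * t + vmin - cmax * T) 0
          = ∫ t in (T - vmin / cmax)..T, (cmax * t + (vmin - cmax * T)) := by
        apply intervalIntegral.integral_congr
        intro x hx
        rw [Set.uIcc_of_le ht2T] at hx
        have hcx : cmax * T - vmin ≤ cmax * x := by
          rw [← hct2]; gcongr; exact hx.1
        have hge : (0:ℝ) ≤ cmax * x + vmin - cmax * T := by linarith
        show max (cmax * x + vmin - cmax * T) 0 = cmax * x + (vmin - cmax * T)
        rw [max_eq_left hge]; ring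
      rw [e1, e2, integral_linear]
      field_simp
      ring
    have hsum : ∫ t in (0:ℝ)..T,
        (max (-dmax * t + v1) 0 + max (cmax * t + vmin - cmax * T) 0)
        = v1 ^ 2 / (2 * dmax) + vmin ^ 2 / (2 * cmax) := by
      rw [intervalIntegral.integral_add (hFc.intervalIntegrable 0 T)
        (hGc.intervalIntegrable 0 T), hFint, hGint]
    have hv1vmax : v1 ^ 2 / (2 * dmax) ≤ vmax ^ 2 / (2 * dmax) := by
      gcongr
    linarith [hbound, hsum.le]
  -- intermediate value theorem
  have hivt := intermediate_value_Icc h0vmax hDcont.continuousOn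
  obtain ⟨θ, hθ, hDθ⟩ := hivt ⟨hD0, hDmax⟩
  exact ⟨θ, hθ, hDθ⟩
end

section
/- In the directed graph on vertices {0,…,m−1} × {0,…,n−1} (with m, n even, m, n ≥ 2) where horizontal row i has edges directed rightward if i is even and leftward if i is odd, and vertical column j has edges directed downward if j is even and upward if j is odd, every vertex can reach every other vertex (the graph is strongly connected). -/
/-- One step of the alternating one-way grid: vertices are `(row, column)` with row `0` the
bottom.  Row `i` is directed rightward iff `i` is even, column `j` is directed downward
(toward row `0`) iff `j` is even. -/
def gridStep (m n : ℕ) (u v : ℕ × ℕ) : Prop :=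
  u.1 < m ∧ u.2 < n ∧ v.1 < m ∧ v.2 < n ∧
    ((u.1 = v.1 ∧ ((u.1 % 2 = 0 ∧ v.2 = u.2 + 1) ∨ (u.1 % 2 = 1 ∧ u.2 = v.2 + 1))) ∨
     (u.2 = v.2 ∧ ((u.2 % 2 = 0 ∧ u.1 = v.1 + 1) ∨ (u.2 % 2 = 1 ∧ v.1 = u.1 + 1))))

private lemma grid_right (m n i j : ℕ) (hi : i < m) (he : i % 2 = 0) :
    ∀ k, j + k < n → Relation.ReflTransGen (gridStep m n) (i, j) (i, j + k) := by
  intro k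
  induction k with
  | zero => exact fun _ => .refl
  | succ k ih =>
    intro h
    exact (ih (by omega)).tail ⟨hi, by omega, hi, by omega, Or.inl ⟨rfl, Or.inl ⟨he, rfl⟩⟩⟩

private lemma grid_left (m n i j : ℕ) (hi : i < m) (he : i % 2 = 1) :
    ∀ k, j + k < n → Relation.ReflTransGen (gridStep m n) (i, j + k) (i, j) := by
  intro k
  induction k with
  | zero => exact fun _ => .refl
  | succ k ih =>
    intro h
    refine .head ?_ (ih (by omega))
    exact ⟨hi, by omega, hi, by omega, Or.inl ⟨rfl, Or.inr ⟨he, rfl⟩⟩⟩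

private lemma grid_down (m n i j : ℕ) (hj : j < n) (he : j % 2 = 0) :
    ∀ k, i + k < m → Relation.ReflTransGen (gridStep m n) (i + k, j) (i, j) := by
  intro k
  induction k with
  | zero => exact fun _ => .refl
  | succ k ih =>
    intro h
    refine .head ?_ (ih (by omega))
    exact ⟨by omega, hj, by omega, hj, Or.inr ⟨rfl, Or.inl ⟨he, rfl⟩⟩⟩

private lemma grid_up (m n i j : ℕ) (hj : j < n) (he : j % 2 = 1) :
    ∀ k, i + k < m → Relation.ReflTransGen (gridStep m n) (i, j) (i + k, j) := by
  intro k
  induction k with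
  | zero => exact fun _ => .refl
  | succ k ih =>
    intro h
    exact (ih (by omega)).tail ⟨by omega, hj, by omega, hj, Or.inr ⟨rfl, Or.inr ⟨he, rfl⟩⟩⟩

/-- Global accessibility (Proposition 1): in the alternating one-way grid with `m`, `n` even,
`m, n ≥ 2`, every vertex can reach every other vertex. -/
theorem grid_strongly_connected (m n : ℕ) (hm : Even m) (hn : Even n)
    (hm2 : 2 ≤ m) (hn2 : 2 ≤ n) (u v : ℕ × ℕ)
    (hu : u.1 < m ∧ u.2 < n) (hv : v.1 < m ∧ v.2 < n) :
    Relation.ReflTransGen (gridStep m n) u v := by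
  obtain ⟨hu1, hu2⟩ := hu
  obtain ⟨hv1, hv2⟩ := hv
  obtain ⟨a, rfl⟩ := hm
  obtain ⟨b, rfl⟩ := hn
  have hmod : (a + a - 1) % 2 = 1 := by omega
  have hnod : (b + b - 1) % 2 = 1 := by omega
  obtain ⟨u1, u2⟩ := u
  obtain ⟨v1, v2⟩ := v
  simp only at hu1 hu2 hv1 hv2
  -- outer cycle pieces
  have top_left : Relation.ReflTransGen (gridStep (a+a) (b+b)) (a+a-1, b+b-1) (a+a-1, 0) := by
    have := grid_left (a+a) (b+b) (a+a-1) 0 (by omega) hmod (b+b-1) (by omega)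
    simpa using this
  have left_down : Relation.ReflTransGen (gridStep (a+a) (b+b)) (a+a-1, 0) (0, 0) := by
    have := grid_down (a+a) (b+b) 0 0 (by omega) (by omega) (a+a-1) (by omega)
    simpa using this
  have bot_right : ∀ j, j < b + b →
      Relation.ReflTransGen (gridStep (a+a) (b+b)) (0, 0) (0, j) := by
    intro j hj
    have := grid_right (a+a) (b+b) 0 0 (by omega) (by omega) j (by omega)
    simpa using this
  have right_up : Relation.ReflTransGen (gridStep (a+a) (b+b)) (0, b+b-1) (a+a-1, b+b-1) := by
    have := grid_up (a+a) (b+b) 0 (b+b-1) (by omega) hnod (a+a-1) (by omega)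
    simpa using this
  -- u reaches (0,0)
  have hto : Relation.ReflTransGen (gridStep (a+a) (b+b)) (u1, u2) (0, 0) := by
    rcases Nat.even_or_odd u2 with h2 | h2 <;> [rw [Nat.even_iff] at h2; rw [Nat.odd_iff] at h2]
    · -- go down column u2, then right to b+b-1, up, left, down
      have hd : Relation.ReflTransGen (gridStep (a+a) (b+b)) (u1, u2) (0, u2) := by
        have := grid_down (a+a) (b+b) 0 u2 hu2 (by omega) u1 (by omega)
        simpa using this
      have hr : Relation.ReflTransGen (gridStep (a+a) (b+b)) (0, u2) (0, b+b-1) := by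
        have := grid_right (a+a) (b+b) 0 u2 (by omega) (by omega) (b+b-1-u2) (by omega)
        have h' : u2 + (b+b-1-u2) = b+b-1 := by omega
        rwa [h'] at this
      exact ((((hd.trans hr).trans right_up).trans top_left).trans left_down)
    · -- go up column u2 to top row, then left, down
      have hup : Relation.ReflTransGen (gridStep (a+a) (b+b)) (u1, u2) (a+a-1, u2) := by
        have := grid_up (a+a) (b+b) u1 u2 hu2 (by omega) (a+a-1-u1) (by omega)
        have h' : u1 + (a+a-1-u1) = a+a-1 := by omega
        rwa [h'] at this
      have hl : Relation.ReflTransGen (gridStep (a+a) (b+b)) (a+a-1, u2) (a+a-1, 0) := by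
        have := grid_left (a+a) (b+b) (a+a-1) 0 (by omega) hmod u2 (by omega)
        simpa using this
      exact (hup.trans hl).trans left_down
  -- (0,0) reaches v
  have hfrom : Relation.ReflTransGen (gridStep (a+a) (b+b)) (0, 0) (v1, v2) := by
    rcases Nat.even_or_odd v2 with h2 | h2 <;> [rw [Nat.even_iff] at h2; rw [Nat.odd_iff] at h2]
    · -- right to b+b-1, up, left to v2, down to v1
      have hl : Relation.ReflTransGen (gridStep (a+a) (b+b)) (a+a-1, b+b-1) (a+a-1, v2) := by
        have := grid_left (a+a) (b+b) (a+a-1) v2 (by omega) hmod (b+b-1-v2) (by omega)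
        have h' : v2 + (b+b-1-v2) = b+b-1 := by omega
        rwa [h'] at this
      have hd : Relation.ReflTransGen (gridStep (a+a) (b+b)) (a+a-1, v2) (v1, v2) := by
        have := grid_down (a+a) (b+b) v1 v2 hv2 (by omega) (a+a-1-v1) (by omega)
        have h' : v1 + (a+a-1-v1) = a+a-1 := by omega
        rwa [h'] at this
      exact (((bot_right (b+b-1) (by omega)).trans right_up).trans hl).trans hd
    · -- right to v2, up to v1
      have hup : Relation.ReflTransGen (gridStep (a+a) (b+b)) (0, v2) (v1, v2) := by
        have := grid_up (a+a) (b+b) 0 v2 hv2 (by omega) v1 (by omega)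
        simpa using this
      exact (bot_right v2 hv2).trans hup
  exact hto.trans hfrom
end

section
/- For a partition of a cycle of length t̂ into a horizontal window of length β·t̂ and a vertical window of length (1−β)·t̂ with 0 < β < 1, if horizontal platoons enter at times k·t̂ (k ∈ ℕ) and occupy the crossroads for duration at most β·t̂, while vertical platoons enter at times (k+β)·t̂ and occupy it for duration at most (1−β)·t̂, and each segment travel time is an integer multiple of t̂, then no horizontal platoon's occupation interval at any crossroads overlaps the interior of any vertical platoon's occupation interval. -/
/-- Imbalanced-demand rhythm (Section 4.2): with window split `β ∈ (0,1)`, a horizontal platoon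
entering at `k_h t̂` occupies a crossroads during
`[(k_h + a c_h) t̂ + t_e, (k_h + a c_h) t̂ + t_e + β t̂]`, and a vertical platoon entering at
`(k_v + β) t̂` occupies it during `[(k_v + β + a c_v) t̂ + t_e, (k_v + 1 + a c_v) t̂ + t_e]`.
No horizontal occupation interval meets the interior of any vertical occupation interval. -/
theorem imbalanced_rhythm_no_conflict (that β t_e : ℝ) (hthat : 0 < that)
    (hβ0 : 0 < β) (hβ1 : β < 1) (hte : 0 ≤ t_e) (a : ℕ) (ha : 0 < a)
    (k_h k_v c_h c_v : ℕ) :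
    Set.Icc ((k_h + a * c_h) * that + t_e) ((k_h + a * c_h) * that + t_e + β * that) ∩
      Set.Ioo ((k_v + β + a * c_v) * that + t_e) ((k_v + 1 + a * c_v) * that + t_e) = ∅ := by
  rw [Set.eq_empty_iff_forall_notMem]
  rintro x ⟨⟨h1, h2⟩, h3, h4⟩
  rcases le_or_gt (k_h + a * c_h) (k_v + a * c_v) with h | h
  · have hc : ((k_h : ℝ) + a * c_h) ≤ (k_v : ℝ) + a * c_v := by exact_mod_cast h
    nlinarith
  · have hc : ((k_v : ℝ) + a * c_v) + 1 ≤ (k_h : ℝ) + a * c_h := by exact_mod_cast h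
    nlinarith
end

section
/- On the alternating one-way grid directed graph on {0,…,m−1} × {0,…,n−1} with m, n even and unit edge lengths, for every pair of vertices u, v the directed shortest-path distance d(u,v) satisfies d(u,v) ≤ d_M(u,v) + 2(m + n), where d_M is the Manhattan (ℓ¹) distance. -/
/-- `reachIn step k u v` holds iff there is a directed walk of length exactly `k` from `u`
to `v`. -/
def reachIn {α : Type*} (step : α → α → Prop) : ℕ → α → α → Prop
  | 0, u, v => u = v
  | k + 1, u, v => ∃ w, step u w ∧ reachIn step k w v

namespace GridDetour

lemma cons {α : Type*} {s : α → α → Prop} {k : ℕ} {u w v : α}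
    (h1 : s u w) (h2 : reachIn s k w v) : reachIn s (k + 1) u v :=
  ⟨w, h1, h2⟩

lemma single {α : Type*} {s : α → α → Prop} {u v : α} (h : s u v) : reachIn s 1 u v :=
  ⟨v, h, rfl⟩

lemma reachIn_trans {α : Type*} {s : α → α → Prop} :
    ∀ {k l : ℕ} {u w v : α}, reachIn s k u w → reachIn s l w v → reachIn s (k + l) u v := by
  intro k
  induction k with
  | zero =>
      intro l u w v h1 h2
      obtain rfl : u = w := h1
      simpa [Nat.zero_add] using h2
  | succ k ih =>
      intro l u w v h1 h2
      obtain ⟨x, hx, h1'⟩ := h1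
      have h : reachIn s (k + l) x v := ih h1' h2
      have e : k + 1 + l = (k + l) + 1 := by omega
      rw [e]
      exact ⟨x, hx, h⟩

variable {m n : ℕ}

lemma step_right {i j : ℕ} (hi : i < m) (h2 : i % 2 = 0) (hj : j + 1 < n) :
    gridStep m n (i, j) (i, j + 1) :=
  ⟨hi, by omega, hi, hj, Or.inl ⟨rfl, Or.inl ⟨h2, rfl⟩⟩⟩

lemma step_left {i j : ℕ} (hi : i < m) (h2 : i % 2 = 1) (hj : j + 1 < n) :
    gridStep m n (i, j + 1) (i, j) :=
  ⟨hi, hj, hi, by omega, Or.inl ⟨rfl, Or.inr ⟨h2, rfl⟩⟩⟩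

lemma step_down {i j : ℕ} (h2 : j % 2 = 0) (hj : j < n) (hi : i + 1 < m) :
    gridStep m n (i + 1, j) (i, j) :=
  ⟨hi, hj, by omega, hj, Or.inr ⟨rfl, Or.inl ⟨h2, rfl⟩⟩⟩

lemma step_up {i j : ℕ} (h2 : j % 2 = 1) (hj : j < n) (hi : i + 1 < m) :
    gridStep m n (i, j) (i + 1, j) :=
  ⟨by omega, hj, hi, hj, Or.inr ⟨rfl, Or.inr ⟨h2, rfl⟩⟩⟩

lemma reach_right (i : ℕ) (hi : i < m) (h2 : i % 2 = 0) :
    ∀ d j, j + d < n → reachIn (gridStep m n) d (i, j) (i, j + d) := by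
  intro d
  induction d with
  | zero => intro j _; rfl
  | succ d ih =>
      intro j h
      have hstep := step_right (n := n) hi h2 (show j + 1 < n by omega)
      have hrest := ih (j + 1) (by omega)
      have h' : reachIn (gridStep m n) (d + 1) (i, j) (i, j + 1 + d) := cons hstep hrest
      simpa [show j + 1 + d = j + (d + 1) from by omega] using h'

lemma reach_left (i : ℕ) (hi : i < m) (h2 : i % 2 = 1) :
    ∀ d j, j + d < n → reachIn (gridStep m n) d (i, j + d) (i, j) := by
  intro d
  induction d with
  | zero => intro j _; rfl
  | succ d ih =>
      intro j h
      exact cons (step_left (j := j + d) hi h2 (by omega)) (ih j (by omega))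

lemma reach_down (j : ℕ) (hj : j < n) (h2 : j % 2 = 0) :
    ∀ d i, i + d < m → reachIn (gridStep m n) d (i + d, j) (i, j) := by
  intro d
  induction d with
  | zero => intro i _; rfl
  | succ d ih =>
      intro i h
      exact cons (step_down (i := i + d) h2 hj (by omega)) (ih i (by omega))

lemma reach_up (j : ℕ) (hj : j < n) (h2 : j % 2 = 1) :
    ∀ d i, i + d < m → reachIn (gridStep m n) d (i, j) (i + d, j) := by
  intro d
  induction d with
  | zero => intro i _; rfl
  | succ d ih =>
      intro i h
      have hrest := ih (i + 1) (by omega)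
      have h' : reachIn (gridStep m n) (d + 1) (i, j) (i + 1 + d, j) :=
        cons (step_up h2 hj (by omega)) hrest
      simpa [show i + 1 + d = i + (d + 1) from by omega] using h'

lemma go_right {i j b : ℕ} (hi : i < m) (h2 : i % 2 = 0) (hb : b < n) (hjb : j ≤ b) :
    reachIn (gridStep m n) (b - j) (i, j) (i, b) := by
  simpa [Nat.add_sub_cancel' hjb] using reach_right i hi h2 (b - j) j (by omega)

lemma go_left {i j b : ℕ} (hi : i < m) (h2 : i % 2 = 1) (hj : j < n) (hbj : b ≤ j) :
    reachIn (gridStep m n) (j - b) (i, j) (i, b) := by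
  simpa [Nat.add_sub_cancel' hbj] using reach_left i hi h2 (j - b) b (by omega)

lemma go_down {i j a : ℕ} (hj : j < n) (h2 : j % 2 = 0) (hi : i < m) (hai : a ≤ i) :
    reachIn (gridStep m n) (i - a) (i, j) (a, j) := by
  simpa [Nat.add_sub_cancel' hai] using reach_down j hj h2 (i - a) a (by omega)

lemma go_up {i j a : ℕ} (hj : j < n) (h2 : j % 2 = 1) (ha : a < m) (hia : i ≤ a) :
    reachIn (gridStep m n) (a - i) (i, j) (a, j) := by
  simpa [Nat.add_sub_cancel' hia] using reach_up j hj h2 (a - i) i (by omega)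

lemma dist_def (x y : ℕ) : Nat.dist x y = x - y + (y - x) := rfl

/-- Vertical routing: from `(i, j)` reach row `a` in some column `j'` adjacent to `j`,
with at most 3 extra steps. -/
lemma vert (hm : m % 2 = 0) (hn : n % 2 = 0) (hm2 : 2 ≤ m) (hn2 : 2 ≤ n)
    (i j a : ℕ) (hi : i < m) (hj : j < n) (ha : a < m) :
    ∃ j' k, j' < n ∧ Nat.dist j j' ≤ 1 ∧ k ≤ Nat.dist i a + 3 ∧
      reachIn (gridStep m n) k (i, j) (a, j') := by
  rcases Nat.mod_two_eq_zero_or_one j with hj2 | hj2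
  · -- column j even (goes down)
    rcases le_or_gt a i with h | h
    · exact ⟨j, i - a, hj, by simp [dist_def], by simp [dist_def]; omega,
        go_down hj hj2 hi h⟩
    · rcases Nat.mod_two_eq_zero_or_one i with hi2 | hi2
      · -- i even: step right then up
        refine ⟨j + 1, (a - i) + 1, by omega, by simp [dist_def], by simp [dist_def]; omega, ?_⟩
        exact cons (step_right hi hi2 (by omega))
          (go_up (by omega) (by omega) ha (by omega))
      · rcases Nat.eq_zero_or_pos j with rfl | hjpos
        · -- j = 0, i odd: down, right, up
          obtain ⟨i0, rfl⟩ : ∃ i0, i = i0 + 1 := ⟨i - 1, by omega⟩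
          refine ⟨1, (a - i0) + 1 + 1, by omega, by simp [dist_def], by simp [dist_def]; omega, ?_⟩
          exact cons (step_down (by omega) (by omega) hi)
            (cons (step_right (by omega) (by omega) (by omega))
              (go_up (by omega) (by omega) ha (by omega)))
        · -- j ≥ 1, i odd: left then up
          obtain ⟨j0, rfl⟩ : ∃ j0, j = j0 + 1 := ⟨j - 1, by omega⟩
          refine ⟨j0, (a - i) + 1, by omega, by simp [dist_def], by simp [dist_def]; omega, ?_⟩
          exact cons (step_left hi hi2 hj)
            (go_up (by omega) (by omega) ha (by omega))
  · -- column j odd (goes up)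
    rcases le_or_gt i a with h | h
    · exact ⟨j, a - i, hj, by simp [dist_def], by simp [dist_def]; omega,
        go_up hj hj2 ha h⟩
    · rcases Nat.mod_two_eq_zero_or_one i with hi2 | hi2
      · rcases lt_or_ge (j + 1) n with h' | h'
        · -- i even, j+1 < n: right then down
          refine ⟨j + 1, (i - a) + 1, by omega, by simp [dist_def], by simp [dist_def]; omega, ?_⟩
          exact cons (step_right hi hi2 h')
            (go_down (by omega) (by omega) hi (by omega))
        · -- i even, j = n - 1: up, left, down
          obtain ⟨j0, rfl⟩ : ∃ j0, j = j0 + 1 := ⟨j - 1, by omega⟩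
          refine ⟨j0, ((i + 1) - a) + 1 + 1, by omega, by simp [dist_def],
            by simp [dist_def]; omega, ?_⟩
          exact cons (step_up hj2 hj (by omega))
            (cons (step_left (by omega) (by omega) hj)
              (go_down (by omega) (by omega) (by omega) (by omega)))
      · -- i odd: left then down
        obtain ⟨j0, rfl⟩ : ∃ j0, j = j0 + 1 := ⟨j - 1, by omega⟩
        refine ⟨j0, (i - a) + 1, by omega, by simp [dist_def], by simp [dist_def]; omega, ?_⟩
        exact cons (step_left hi hi2 hj)
          (go_down (by omega) (by omega) hi (by omega))

/-- Horizontal routing within (logical) row `a`: from `(a, c)` reach `(a, b)` exactly,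
with at most 6 extra steps. -/
lemma horiz (hm : m % 2 = 0) (hn : n % 2 = 0) (hm2 : 2 ≤ m) (hn2 : 2 ≤ n)
    (a c b : ℕ) (ha : a < m) (hc : c < n) (hb : b < n) :
    ∃ k, k ≤ Nat.dist c b + 6 ∧ reachIn (gridStep m n) k (a, c) (a, b) := by
  rcases lt_trichotomy c b with h | rfl | h
  · -- need to move right
    rcases Nat.mod_two_eq_zero_or_one a with ha2 | ha2
    · exact ⟨b - c, by simp [dist_def]; omega, go_right ha ha2 hb (by omega)⟩
    · -- a odd: detour through even row a - 1
      obtain ⟨a0, rfl⟩ : ∃ a0, a = a0 + 1 := ⟨a - 1, by omega⟩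
      have ha0 : a0 % 2 = 0 := by omega
      -- phase 1: get to (a0, c') with c' even, c' ≤ c ≤ c' + 1
      have h1 : ∃ c' e, c' % 2 = 0 ∧ c' ≤ c ∧ c ≤ c' + 1 ∧ e ≤ 2 ∧
          reachIn (gridStep m n) e (a0 + 1, c) (a0, c') := by
        rcases Nat.mod_two_eq_zero_or_one c with hc2 | hc2
        · exact ⟨c, 1, hc2, le_refl _, by omega, by omega,
            single (step_down hc2 hc ha)⟩
        · obtain ⟨c0, rfl⟩ : ∃ c0, c = c0 + 1 := ⟨c - 1, by omega⟩
          exact ⟨c0, 2, by omega, by omega, by omega, le_refl _,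
            cons (step_left ha ha2 hc) (single (step_down (by omega) (by omega) ha))⟩
      -- phase 2: from (a0, c') ride right and come back up to row a0+1
      have h2 : ∀ c', c' % 2 = 0 → c' ≤ b → c' < n → ∃ f, f ≤ (b - c') + 3 ∧
          reachIn (gridStep m n) f (a0, c') (a0 + 1, b) := by
        intro c' hc'2 hc'b hc'n
        rcases Nat.mod_two_eq_zero_or_one b with hb2 | hb2
        · -- b even: overshoot to b+1, up, left
          have hb1 : b + 1 < n := by omega
          refine ⟨(b + 1 - c') + (1 + 1), by omega, ?_⟩
          exact reachIn_trans (go_right (by omega) ha0 hb1 (by omega))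
            (cons (step_up (by omega) hb1 ha)
              (single (step_left ha ha2 hb1)))
        · refine ⟨(b - c') + 1, by omega, ?_⟩
          exact reachIn_trans (go_right (by omega) ha0 hb (by omega))
            (single (step_up hb2 hb ha))
      obtain ⟨c', e, hc'2, hc'c, hcc', he, hre⟩ := h1
      obtain ⟨f, hf, hrf⟩ := h2 c' hc'2 (by omega) (by omega)
      exact ⟨e + f, by simp [dist_def]; omega, reachIn_trans hre hrf⟩
  · exact ⟨0, by omega, rfl⟩
  · -- need to move left
    rcases Nat.mod_two_eq_zero_or_one a with ha2 | ha2
    · -- a even: detour through odd row a + 1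
      have ham : a + 1 < m := by omega
      have h1 : ∃ c' e, c' % 2 = 1 ∧ c ≤ c' ∧ c' ≤ c + 1 ∧ c' < n ∧ e ≤ 2 ∧
          reachIn (gridStep m n) e (a, c) (a + 1, c') := by
        rcases Nat.mod_two_eq_zero_or_one c with hc2 | hc2
        · have hc1 : c + 1 < n := by omega
          exact ⟨c + 1, 2, by omega, by omega, le_refl _, hc1, le_refl _,
            cons (step_right ha ha2 hc1) (single (step_up (by omega) hc1 ham))⟩
        · exact ⟨c, 1, hc2, le_refl _, by omega, hc, by omega,
            single (step_up hc2 hc ham)⟩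
      have h2 : ∀ c', c' % 2 = 1 → b ≤ c' → c' < n → ∃ f, f ≤ (c' - b) + 3 ∧
          reachIn (gridStep m n) f (a + 1, c') (a, b) := by
        intro c' hc'2 hbc' hc'n
        rcases Nat.mod_two_eq_zero_or_one b with hb2 | hb2
        · refine ⟨(c' - b) + 1, by omega, ?_⟩
          exact reachIn_trans (go_left ham (by omega) hc'n (by omega))
            (single (step_down hb2 (by omega) ham))
        · -- b odd: overshoot to b-1, down, right
          obtain ⟨b0, rfl⟩ : ∃ b0, b = b0 + 1 := ⟨b - 1, by omega⟩
          refine ⟨(c' - b0) + (1 + 1), by omega, ?_⟩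
          exact reachIn_trans (go_left ham (by omega) hc'n (by omega))
            (cons (step_down (by omega) (by omega) ham)
              (single (step_right ha ha2 hb)))
      obtain ⟨c', e, hc'2, hcc', hc'c, hc'n, he, hre⟩ := h1
      obtain ⟨f, hf, hrf⟩ := h2 c' hc'2 (by omega) hc'n
      exact ⟨e + f, by simp [dist_def]; omega, reachIn_trans hre hrf⟩
    · exact ⟨c - b, by simp [dist_def]; omega, go_left ha ha2 hc (by omega)⟩

/-- The 2×2 grid is a directed 4-cycle; everything is reachable in at most 3 steps. -/
lemma cyc22 (ui uj vi vj : ℕ) (h1 : ui < 2) (h2 : uj < 2) (h3 : vi < 2) (h4 : vj < 2) :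
    ∃ k, k ≤ 3 ∧ reachIn (gridStep 2 2) k (ui, uj) (vi, vj) := by
  have s1 : gridStep 2 2 (0, 0) (0, 1) := step_right (by norm_num) (by norm_num) (by norm_num)
  have s2 : gridStep 2 2 (0, 1) (1, 1) := step_up (by norm_num) (by norm_num) (by norm_num)
  have s3 : gridStep 2 2 (1, 1) (1, 0) := step_left (by norm_num) (by norm_num) (by norm_num)
  have s4 : gridStep 2 2 (1, 0) (0, 0) := step_down (by norm_num) (by norm_num) (by norm_num)
  interval_cases ui <;> interval_cases uj <;> interval_cases vi <;> interval_cases vj <;>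
    first
      | exact ⟨0, by norm_num, rfl⟩
      | exact ⟨1, by norm_num, single s1⟩
      | exact ⟨1, by norm_num, single s2⟩
      | exact ⟨1, by norm_num, single s3⟩
      | exact ⟨1, by norm_num, single s4⟩
      | exact ⟨2, by norm_num, cons s1 (single s2)⟩
      | exact ⟨2, by norm_num, cons s2 (single s3)⟩
      | exact ⟨2, by norm_num, cons s3 (single s4)⟩
      | exact ⟨2, by norm_num, cons s4 (single s1)⟩
      | exact ⟨3, by norm_num, cons s1 (cons s2 (single s3))⟩
      | exact ⟨3, by norm_num, cons s2 (cons s3 (single s4))⟩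
      | exact ⟨3, by norm_num, cons s3 (cons s4 (single s1))⟩
      | exact ⟨3, by norm_num, cons s4 (cons s1 (single s2))⟩

end GridDetour

/-- Detour bound: on the alternating one-way grid with `m`, `n` even (`m, n ≥ 2`) and unit edge
lengths, the directed shortest-path distance between any two grid vertices exceeds their
Manhattan distance by at most `2(m + n)`: there is a directed path of length at most
`d_M(u,v) + 2(m + n)`. -/
theorem grid_detour_bound (m n : ℕ) (hm : Even m) (hn : Even n) (hm2 : 2 ≤ m) (hn2 : 2 ≤ n)
    (u v : ℕ × ℕ) (hu : u.1 < m ∧ u.2 < n) (hv : v.1 < m ∧ v.2 < n) :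
    ∃ k : ℕ, reachIn (gridStep m n) k u v ∧
      k ≤ Nat.dist u.1 v.1 + Nat.dist u.2 v.2 + 2 * (m + n) := by
  obtain ⟨ui, uj⟩ := u
  obtain ⟨vi, vj⟩ := v
  obtain ⟨hu1, hu2⟩ := hu
  obtain ⟨hv1, hv2⟩ := hv
  have hm' : m % 2 = 0 := Nat.even_iff.mp hm
  have hn' : n % 2 = 0 := Nat.even_iff.mp hn
  by_cases h22 : m = 2 ∧ n = 2
  · obtain ⟨rfl, rfl⟩ := h22
    obtain ⟨k, hk, hr⟩ := GridDetour.cyc22 ui uj vi vj hu1 hu2 hv1 hv2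
    exact ⟨k, hr, by simp only [GridDetour.dist_def]; omega⟩
  · obtain ⟨j', k1, hj'n, hdj, hk1, hr1⟩ :=
      GridDetour.vert hm' hn' hm2 hn2 ui uj vi hu1 hu2 hv1
    obtain ⟨k2, hk2, hr2⟩ :=
      GridDetour.horiz hm' hn' hm2 hn2 vi j' vj hv1 hj'n hv2
    refine ⟨k1 + k2, GridDetour.reachIn_trans hr1 hr2, ?_⟩
    simp only [GridDetour.dist_def] at hdj hk1 hk2 ⊢
    omega
end
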